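/- With X a compact Kähler surface, n a Kähler class, c = √−1, and the mixed Hodge structure (𝒲_•, ℱ^•) on A_ℝ = H^even(X,ℝ)∪e^{cn} as above, the Hodge decomposition of the graded pieces is: Gr₁ has A^{1,0} = ℂn, A^{0,1} = ℂ(n² + (1/2c)n); Gr₂ has A^{1,1} = H²_prim(X,ℂ) (assuming h^{2,0} = h^{0,2} = 0); Gr₄ has A^{2,2} = ℂ·1; all other A^{p,q} vanish. -/
import Mathlib


open Submodule

lemma aux_span_coe_sup {A : Type*} [AddCommGroup A] [Module ℝ A] [Module ℂ A]
    (P Q : Submodule ℝ A) :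
    span ℂ ((P ⊔ Q : Submodule ℝ A) : Set A) = span ℂ (P : Set A) ⊔ span ℂ (Q : Set A) := by
  apply le_antisymm
  · rw [span_le]
    intro x hx
    obtain ⟨p, hp, q, hq, rfl⟩ := mem_sup.mp hx
    exact add_mem (le_sup_left (α := Submodule ℂ A) (subset_span hp))
      (le_sup_right (α := Submodule ℂ A) (subset_span hq))
  · exact sup_le (span_mono (by exact_mod_cast le_sup_left))
      (span_mono (by exact_mod_cast le_sup_right))

lemma aux_realdecomp {A : Type*} [AddCommGroup A] [Module ℝ A] [Module ℂ A]
    (conj : A →ₗ[ℝ] A)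
    (hca : ∀ (z : ℂ) (x : A), conj (z • x) = (starRingEnd ℂ z) • conj x)
    (hcc : ∀ x, conj (conj x) = x) (x : A) :
    ∃ r s : A, conj r = r ∧ conj s = s ∧
      r ∈ span ℂ {x, conj x} ∧ s ∈ span ℂ {x, conj x} ∧
      x = r + Complex.I • s := by
  have hI : Complex.I * (-(Complex.I)/2) = 1/2 := by
    norm_num [Complex.ext_iff]
  refine ⟨(1/2 : ℂ) • (x + conj x), (-(Complex.I)/2) • (x - conj x), ?_, ?_, ?_, ?_, ?_⟩
  · rw [hca, map_add, hcc]
    norm_num [add_comm, map_ofNat]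
  · rw [hca, map_sub, hcc]
    have : (starRingEnd ℂ) (-Complex.I / 2) = Complex.I / 2 := by
      simp [map_div₀, map_ofNat]
    rw [this]
    module
  · exact mem_span_pair.mpr ⟨1/2, 1/2, by module⟩
  · exact mem_span_pair.mpr ⟨-(Complex.I)/2, Complex.I/2, by module⟩
  · rw [smul_smul, hI]
    module

-- span of real points of a conj-stable complex submodule
lemma aux_span_realpts {A : Type*} [AddCommGroup A] [Module ℝ A] [Module ℂ A]
    [IsScalarTower ℝ ℂ A]
    (conj : A →ₗ[ℝ] A)
    (hca : ∀ (z : ℂ) (x : A), conj (z • x) = (starRingEnd ℂ z) • conj x)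
    (hcc : ∀ x, conj (conj x) = x)
    (P : Submodule ℂ A) (hP : ∀ x ∈ P, conj x ∈ P) :
    span ℂ ((LinearMap.ker (conj - LinearMap.id) ⊓ P.restrictScalars ℝ : Submodule ℝ A) : Set A)
      = P := by
  apply le_antisymm
  · rw [span_le]
    intro x hx
    exact hx.2
  · intro x hx
    obtain ⟨r, s, hr, hs, hrm, hsm, hx'⟩ := aux_realdecomp conj hca hcc x
    have hsub : span ℂ {x, conj x} ≤ P := by
      rw [span_le]
      rintro y (rfl | rfl)
      · exact hx
      · exact hP x hx
    have hrP : r ∈ P := hsub hrm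
    have hsP : s ∈ P := hsub hsm
    rw [hx']
    have hmem : ∀ y : A, conj y = y → y ∈ P →
        y ∈ span ℂ ((LinearMap.ker (conj - LinearMap.id) ⊓ P.restrictScalars ℝ : Submodule ℝ A) : Set A) := by
      intro y hy hyP
      apply subset_span
      exact ⟨by simp [LinearMap.mem_ker, hy], hyP⟩
    exact add_mem (hmem r hr hrP) (smul_mem _ _ (hmem s hs hsP))

/-- the Hodge decomposition of the graded pieces of the mixed
Hodge structure `(𝒲_•, ℱ^•)` on `A_ℝ = H^even(X,ℝ)·e^{cn}` (`c = √−1`), where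
`A^{p,q} = ℱ^p(Gr_k^𝒲) ∩ conjugate(ℱ^q(Gr_k^𝒲))` and the conjugation with
respect to the real form `A_ℝ` is `conjAR y = conj y · e^{2cn}`:
`Gr₁` has `A^{1,0} = ℂn` and `A^{0,1} = ℂ(n² + (1/2c)n) = ℂ(n² − (i/2)n)`
(with `A^{2,·}(Gr₁) = 0`); `Gr₂ = A^{1,1} = H²_prim(X,ℂ)` (with
`A^{2,0}(Gr₂) = 0`); `Gr₃ = 0`; `Gr₄` has `A^{2,2} = ℂ·1`. -/
theorem stmt10 {A : Type*} [CommRing A] [Algebra ℂ A] [FiniteDimensional ℂ A]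
    (H0 H2 H4 : Submodule ℂ A)
    (hsum : H0 ⊔ H2 ⊔ H4 = ⊤)
    (hindep : ∀ a ∈ H0, ∀ x ∈ H2, ∀ y ∈ H4, a + x + y = 0 → a = 0 ∧ x = 0 ∧ y = 0)
    (hH0 : H0 = Submodule.span ℂ {(1 : A)})
    (hmul22 : ∀ x ∈ H2, ∀ y ∈ H2, x * y ∈ H4)
    (hmul24 : ∀ x ∈ H2, ∀ y ∈ H4, x * y = 0)
    (hmul44 : ∀ x ∈ H4, ∀ y ∈ H4, x * y = 0)
    (intg : A →ₗ[ℂ] ℂ)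
    (hint0 : ∀ x ∈ H0 ⊔ H2, intg x = 0)
    (hnondeg : ∀ x : A, (∀ y : A, intg (x * y) = 0) → x = 0)
    -- real structure
    (conj : A →ₗ[ℝ] A)
    (hcc : ∀ x, conj (conj x) = x)
    (hcm : ∀ x y, conj (x * y) = conj x * conj y)
    (hca : ∀ (z : ℂ) (x : A), conj (z • x) = (starRingEnd ℂ z) • conj x)
    (hc1 : conj 1 = 1)
    (hcH0 : ∀ x ∈ H0, conj x ∈ H0)
    (hcH2 : ∀ x ∈ H2, conj x ∈ H2)
    (hcH4 : ∀ x ∈ H4, conj x ∈ H4)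
    -- the Kähler class
    (n : A) (hn : n ∈ H2) (hcn : conj n = n)
    (K : ℝ) (hK : intg (n * n) = (K : ℂ)) (hKpos : 0 < K)
    (hH4 : H4 = Submodule.span ℂ {n * n})
    (hlef : H2 = (H2 ⊓ LinearMap.ker (LinearMap.mulRight ℂ n)) ⊔
      Submodule.span ℂ {n}) :
    let expc : A := 1 + Complex.I • n - (1 / 2 : ℂ) • (n * n)
    let Rpts : Submodule ℝ A := LinearMap.ker (conj - LinearMap.id)
    let ARsub : Submodule ℝ A :=
      Submodule.map ((LinearMap.mulRight ℂ expc).restrictScalars ℝ) Rpts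
    let conjAR : A →ₗ[ℝ] A :=
      ((LinearMap.mulRight ℂ (expc * expc)).restrictScalars ℝ).comp conj
    let prim : Submodule ℂ A := H2 ⊓ LinearMap.ker (LinearMap.mulRight ℂ n)
    let primR : Submodule ℝ A := Rpts ⊓ prim.restrictScalars ℝ
    let W : ℤ → Submodule ℝ A := fun l =>
      if l ≤ 0 then ⊥
      else if l = 1 then Submodule.span ℝ {n + Complex.I • (n * n), n * n}
      else if l ≤ 3 then Submodule.span ℝ {n + Complex.I • (n * n), n * n} ⊔ primR
      else ARsub
    let F : ℤ → Submodule ℂ A := fun p =>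
      if p ≤ 0 then ⊤ else if p = 1 then H0 ⊔ H2 else if p = 2 then H0 else ⊥
    let WC : ℤ → Submodule ℂ A := fun l => Submodule.span ℂ (W l : Set A)
    -- Gr₁ (note 𝒲₀ = 0, so Gr₁ = 𝒲₁ ⊗ ℂ):  A^{1,0} = ℂ n
    (F 1 ⊓ WC 1 = Submodule.span ℂ {n}) ∧
    -- A^{0,1} = conjugate(ℱ¹(Gr₁)) = ℂ (n² − (i/2) n)
    (Submodule.map conjAR ((F 1 ⊓ WC 1).restrictScalars ℝ)
      = (Submodule.span ℂ {n * n - (Complex.I / 2) • n}).restrictScalars ℝ) ∧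
    -- A^{2,·}(Gr₁) = 0
    (F 2 ⊓ WC 1 = ⊥) ∧
    -- Gr₂: A^{2,0} = 0 and A^{1,1} = H²_prim(X,ℂ) is all of Gr₂
    (F 2 ⊓ WC 2 ≤ WC 1) ∧
    ((F 1 ⊓ WC 2) ⊔ WC 1 = prim ⊔ WC 1) ∧
    (prim ⊔ WC 1 = WC 2) ∧
    -- Gr₃ = 0
    (WC 3 = WC 2) ∧
    -- Gr₄: A^{2,2} = ℂ·1, and it is all of Gr₄
    (F 2 ⊓ WC 4 = Submodule.span ℂ {(1 : A)}) ∧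
    (Submodule.span ℂ {(1 : A)} ⊔ WC 3 = WC 4) := by
  intro expc Rpts ARsub conjAR prim primR W F WC
  have h1H0 : (1 : A) ∈ H0 := hH0 ▸ Submodule.mem_span_singleton_self 1
  have hn2H4 : n * n ∈ H4 := hmul22 n hn n hn
  have hn3 : n * (n * n) = 0 := hmul24 n hn _ hn2H4
  have haa : algebraMap ℂ A Complex.I * algebraMap ℂ A Complex.I = -1 := by
    rw [← map_mul, Complex.I_mul_I, map_neg, map_one]
  have hh : algebraMap ℂ A (1/2 : ℂ) + algebraMap ℂ A (1/2 : ℂ) = 1 := by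
    rw [← map_add]; norm_num
  have h2I : algebraMap ℂ A (2*Complex.I) = 2 * algebraMap ℂ A Complex.I := by
    rw [map_mul, map_ofNat]
  have hinv : expc * (1 - Complex.I • n - (1/2:ℂ) • (n*n)) = 1 := by
    simp only [expc, Algebra.smul_def]
    linear_combination (-(n*n)) * haa + (-(n*n)) * hh +
      (algebraMap ℂ A (1/2:ℂ) * algebraMap ℂ A (1/2:ℂ) * n) * hn3
  have hne : n * (expc * expc) = n + (2*Complex.I) • (n * n) := by
    simp only [expc, Algebra.smul_def]
    linear_combination (-(n*n)) * h2I +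
      (algebraMap ℂ A Complex.I * algebraMap ℂ A Complex.I
        - 2 * algebraMap ℂ A (1/2:ℂ)
        - 2 * algebraMap ℂ A Complex.I * algebraMap ℂ A (1/2:ℂ) * n
        + algebraMap ℂ A (1/2:ℂ) * algebraMap ℂ A (1/2:ℂ) * n * n) * hn3
  -- evaluate F and W
  have hF1 : F 1 = H0 ⊔ H2 := by simp [F]
  have hF2 : F 2 = H0 := by simp [F]
  have hW1 : W 1 = Submodule.span ℝ {n + Complex.I • (n*n), n*n} := by simp [W]
  have hW2 : W 2 = Submodule.span ℝ {n + Complex.I • (n*n), n*n} ⊔ primR := by simp [W]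
  have hW32 : W 3 = W 2 := by simp [W]
  have hW4 : W 4 = ARsub := by simp [W]
  -- prim facts
  have hcprim : ∀ p ∈ prim, conj p ∈ prim := by
    intro p hp
    simp only [prim, Submodule.mem_inf, LinearMap.mem_ker, LinearMap.mulRight_apply] at hp ⊢
    refine ⟨hcH2 p hp.1, ?_⟩
    rw [← hcn, ← hcm, hp.2, map_zero]
  have hspanprim : Submodule.span ℂ ((primR : Submodule ℝ A) : Set A) = prim := by
    simp only [primR, Rpts]
    exact aux_span_realpts conj hca hcc prim hcprim
  have hWC1 : WC 1 = Submodule.span ℂ {n + Complex.I • (n*n), n*n} := by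
    simp only [WC]
    rw [hW1, Submodule.span_span_of_tower]
  have hWC1mem : ∀ x : A, x ∈ WC 1 ↔ ∃ u v : ℂ, x = u • n + v • (n*n) := by
    intro x
    rw [hWC1, Submodule.mem_span_pair]
    constructor
    · rintro ⟨u, v, rfl⟩
      exact ⟨u, u * Complex.I + v, by module⟩
    · rintro ⟨u, v, rfl⟩
      exact ⟨u, v - u * Complex.I, by module⟩
  have hWC2 : WC 2 = WC 1 ⊔ prim := by
    show Submodule.span ℂ ((W 2 : Submodule ℝ A) : Set A) = _
    rw [hW2, aux_span_coe_sup, Submodule.span_span_of_tower, hspanprim, hWC1]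
  have hWC2mem : ∀ x : A, x ∈ WC 2 ↔ ∃ u v : ℂ, ∃ p ∈ prim, x = u•n + v•(n*n) + p := by
    intro x
    rw [hWC2, Submodule.mem_sup]
    constructor
    · rintro ⟨y, hy, p, hp, rfl⟩
      obtain ⟨u, v, rfl⟩ := (hWC1mem y).mp hy
      exact ⟨u, v, p, hp, rfl⟩
    · rintro ⟨u, v, p, hp, rfl⟩
      exact ⟨u•n + v•(n*n), (hWC1mem _).mpr ⟨u, v, rfl⟩, p, hp, rfl⟩
  have hWC32 : WC 3 = WC 2 := by
    simp only [WC]; rw [hW32]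
  have hWC4 : WC 4 = ⊤ := by
    simp only [WC]
    rw [hW4, eq_top_iff]
    intro b _
    obtain ⟨r, s, hr, hs, -, -, hb⟩ :=
      aux_realdecomp conj hca hcc (b * (1 - Complex.I • n - (1/2:ℂ) • (n*n)))
    have hbinv : (b * (1 - Complex.I • n - (1/2:ℂ)•(n*n))) * expc = b := by
      rw [mul_assoc, mul_comm _ expc, hinv, mul_one]
    have hb' : b = r * expc + Complex.I • (s * expc) := by
      conv_lhs => rw [← hbinv]
      rw [hb, add_mul, smul_mul_assoc]
    rw [hb']
    have hmem : ∀ y : A, conj y = y → (y * expc) ∈ (ARsub : Set A) := by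
      intro y hy
      exact ⟨y, by simp [Rpts, LinearMap.mem_ker, LinearMap.sub_apply, sub_eq_zero, hy],
        by simp [LinearMap.mulRight_apply]⟩
    exact add_mem (Submodule.subset_span (hmem r hr))
      (Submodule.smul_mem _ _ (Submodule.subset_span (hmem s hs)))
  -- Goal 1
  have hG1 : F 1 ⊓ WC 1 = Submodule.span ℂ {n} := by
    rw [hF1]
    apply le_antisymm
    · rintro x hx
      obtain ⟨hxF, hxW⟩ := Submodule.mem_inf.mp hx
      obtain ⟨u, v, rfl⟩ := (hWC1mem x).mp hxW
      obtain ⟨h0, hh0, h2, hh2, heq⟩ := Submodule.mem_sup.mp hxF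
      have h3 : h0 + (h2 - u•n) + (-(v•(n*n))) = 0 := by
        rw [show h0 + (h2 - u•n) + (-(v•(n*n))) = (h0+h2) - (u•n + v•(n*n)) by abel,
          heq, sub_self]
      obtain ⟨-, -, h4⟩ := hindep h0 hh0 _ (sub_mem hh2 (Submodule.smul_mem _ _ hn)) _
        (neg_mem (Submodule.smul_mem _ _ hn2H4)) h3
      rw [neg_eq_zero] at h4
      rw [h4, add_zero]
      exact Submodule.smul_mem _ _ (Submodule.mem_span_singleton_self n)
    · rw [Submodule.span_le, Set.singleton_subset_iff]
      exact Submodule.mem_inf.mpr ⟨Submodule.mem_sup_right hn,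
        (hWC1mem n).mpr ⟨1, 0, by module⟩⟩
  -- Goal 2
  have h2I0 : (2*Complex.I : ℂ) ≠ 0 := by simp [Complex.I_ne_zero]
  have hgen : n * (expc * expc) = (2*Complex.I) • (n*n - (Complex.I/2) • n) := by
    rw [hne, smul_sub, smul_smul]
    have hcoef : (2*Complex.I) * (Complex.I/2) = -1 := by
      norm_num [Complex.ext_iff]
    rw [hcoef, neg_one_smul, sub_neg_eq_add, add_comm]
  have hcAR : ∀ z : ℂ, conjAR (z • n)
      = ((starRingEnd ℂ z) * (2*Complex.I)) • (n*n - (Complex.I/2)•n) := by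
    intro z
    show conj (z • n) * (expc * expc) = _
    rw [hca, hcn, smul_mul_assoc, hgen, smul_smul]
  have hG2 : Submodule.map conjAR ((F 1 ⊓ WC 1).restrictScalars ℝ)
      = (Submodule.span ℂ {n * n - (Complex.I / 2) • n}).restrictScalars ℝ := by
    rw [hG1]
    ext x
    simp only [Submodule.mem_map, Submodule.restrictScalars_mem, Submodule.mem_span_singleton]
    constructor
    · rintro ⟨y, ⟨z, rfl⟩, rfl⟩
      exact ⟨starRingEnd ℂ z * (2*Complex.I), (hcAR z).symm⟩
    · rintro ⟨w, rfl⟩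
      refine ⟨(starRingEnd ℂ (w / (2*Complex.I))) • n,
        ⟨starRingEnd ℂ (w / (2*Complex.I)), rfl⟩, ?_⟩
      rw [hcAR, Complex.conj_conj, div_mul_cancel₀ _ h2I0]
  -- Goal 3
  have hG3 : F 2 ⊓ WC 1 = ⊥ := by
    rw [hF2, eq_bot_iff]
    intro x hx
    obtain ⟨hx0, hxW⟩ := Submodule.mem_inf.mp hx
    obtain ⟨a, ha⟩ := Submodule.mem_span_singleton.mp (hH0 ▸ hx0)
    obtain ⟨u, v, hxe⟩ := (hWC1mem x).mp hxW
    have h3 : a • (1:A) + (-(u•n)) + (-(v•(n*n))) = 0 := by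
      rw [show a • (1:A) + (-(u•n)) + (-(v•(n*n))) = a • (1:A) - (u•n + v•(n*n)) by abel,
        ha, ← hxe, sub_self]
    obtain ⟨h4, -, -⟩ := hindep _ (Submodule.smul_mem _ _ h1H0) _
      (neg_mem (Submodule.smul_mem _ _ hn)) _ (neg_mem (Submodule.smul_mem _ _ hn2H4)) h3
    rw [Submodule.mem_bot, ← ha, h4]
  -- Goal 4
  have hG4 : F 2 ⊓ WC 2 ≤ WC 1 := by
    intro x hx
    obtain ⟨hx0, hxW⟩ := Submodule.mem_inf.mp hx
    rw [hF2] at hx0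
    obtain ⟨a, ha⟩ := Submodule.mem_span_singleton.mp (hH0 ▸ hx0)
    obtain ⟨u, v, p, hp, hxe⟩ := (hWC2mem x).mp hxW
    have h3 : a • (1:A) + (-(u•n + p)) + (-(v•(n*n))) = 0 := by
      rw [show a • (1:A) + (-(u•n + p)) + (-(v•(n*n)))
          = a • (1:A) - (u•n + v•(n*n) + p) by abel, ha, ← hxe, sub_self]
    obtain ⟨h4, -, -⟩ := hindep _ (Submodule.smul_mem _ _ h1H0) _
      (neg_mem (add_mem (Submodule.smul_mem _ _ hn) hp.1)) _
      (neg_mem (Submodule.smul_mem _ _ hn2H4)) h3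
    rw [← ha, h4]
    exact zero_mem _
  -- Goal 5
  have hG5 : (F 1 ⊓ WC 2) ⊔ WC 1 = prim ⊔ WC 1 := by
    apply le_antisymm
    · refine sup_le ?_ le_sup_right
      intro x hx
      obtain ⟨hxF, hxW⟩ := Submodule.mem_inf.mp hx
      rw [hF1] at hxF
      obtain ⟨u, v, p, hp, hxe⟩ := (hWC2mem x).mp hxW
      obtain ⟨h0, hh0, h2, hh2, heq⟩ := Submodule.mem_sup.mp hxF
      have h3 : h0 + (h2 - u•n - p) + (-(v•(n*n))) = 0 := by
        rw [show h0 + (h2 - u•n - p) + (-(v•(n*n)))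
            = (h0 + h2) - (u•n + v•(n*n) + p) by abel, heq, ← hxe, sub_self]
      obtain ⟨-, -, h4⟩ := hindep h0 hh0 _
        (sub_mem (sub_mem hh2 (Submodule.smul_mem _ _ hn)) hp.1) _
        (neg_mem (Submodule.smul_mem _ _ hn2H4)) h3
      rw [neg_eq_zero] at h4
      refine Submodule.mem_sup.mpr ⟨p, hp, u•n, (hWC1mem _).mpr ⟨u, 0, by module⟩, ?_⟩
      rw [hxe, h4]
      abel
    · refine sup_le ?_ le_sup_right
      intro p hp
      refine Submodule.mem_sup_left (Submodule.mem_inf.mpr ⟨?_, ?_⟩)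
      · rw [hF1]; exact Submodule.mem_sup_right hp.1
      · exact (hWC2mem p).mpr ⟨0, 0, p, hp, by module⟩
  -- Goal 6
  have hG6 : prim ⊔ WC 1 = WC 2 := by rw [hWC2, sup_comm]
  -- Goal 8
  have hG8 : F 2 ⊓ WC 4 = Submodule.span ℂ {(1:A)} := by
    rw [hF2, hWC4, inf_top_eq, hH0]
  -- Goal 9
  have hnle : Submodule.span ℂ {n} ≤ WC 1 := by
    rw [Submodule.span_le, Set.singleton_subset_iff]
    exact (hWC1mem n).mpr ⟨1, 0, by module⟩
  have hn2le : Submodule.span ℂ {n*n} ≤ WC 1 := by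
    rw [Submodule.span_le, Set.singleton_subset_iff]
    exact (hWC1mem (n*n)).mpr ⟨0, 1, by module⟩
  have hWC1le : WC 1 ≤ WC 2 := hWC2 ▸ le_sup_left
  have hprimle : prim ≤ WC 2 := hWC2 ▸ le_sup_right
  have hG9 : Submodule.span ℂ {(1:A)} ⊔ WC 3 = WC 4 := by
    rw [hWC32, hWC4, eq_top_iff, ← hsum]
    refine sup_le (sup_le ?_ ?_) ?_
    · rw [hH0]; exact le_sup_left
    · refine le_trans ?_ le_sup_right
      rw [hlef]
      exact sup_le hprimle (hnle.trans hWC1le)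
    · refine le_trans ?_ le_sup_right
      rw [hH4]
      exact hn2le.trans hWC1le
  exact ⟨hG1, hG2, hG3, hG4, hG5, hG6, hWC32, hG8, hG9⟩
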